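/- Let 0 < b < a and n > a+b. Let A ⊆ C([n],a) and B ⊆ C([n],b) be cross-intersecting families, and suppose |B| ≥ C(n−j, b−j) for some integer j ∈ [b]. Then |A| + |B| ≤ C(n,a) + C(n−j, b−j) − C(n−j, a). Moreover, if |B| > C(n−j, b−j), then this inequality is strict unless b = a−1, j = 1 and |B| = C(n,b). -/

import Mathlib

attribute [-instance] instDecidableEqFin
open Finset Finset.Colex


namespace FT


lemma choose_step_le {m z : ℕ} (h : 2 * z + 1 ≤ m) : m.choose z ≤ m.choose (z + 1) := by
  have key := Nat.choose_succ_right_eq m z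
  have hw : z + 1 ≤ m - z := by omega
  have h1 : m.choose z * (z+1) ≤ m.choose z * (m - z) := Nat.mul_le_mul_left _ hw
  rw [← key] at h1
  exact Nat.le_of_mul_le_mul_right h1 (by omega)

lemma choose_step_lt {m z : ℕ} (h : 2 * z + 2 ≤ m) : m.choose z < m.choose (z + 1) := by
  have key := Nat.choose_succ_right_eq m z
  have h0 : 0 < m.choose z := Nat.choose_pos (by omega)
  have h1 : m.choose z * (z+1) < m.choose z * (m - z) :=
    Nat.mul_lt_mul_of_le_of_lt (le_refl _) (by omega) h0
  rw [← key] at h1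
  exact Nat.lt_of_mul_lt_mul_right h1

lemma choose_mono_le {m x y : ℕ} (hxy : x ≤ y) (h : 2 * y ≤ m + 1) :
    m.choose x ≤ m.choose y := by
  induction y with
  | zero => have : x = 0 := by omega
            simp [this]
  | succ y ih =>
      rcases Nat.lt_or_ge x (y+1) with h'|h'
      · exact le_trans (ih (by omega) (by omega)) (choose_step_le (by omega))
      · have : x = y + 1 := by omega
        simp [this]

lemma choose_le_choose_same {m x y : ℕ} (hxy : x ≤ y) (hsum : x + y ≤ m) :
    m.choose x ≤ m.choose y := by
  rcases le_or_gt (2*y) (m+1) with h|h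
  · exact choose_mono_le hxy h
  · have hy : y ≤ m := by omega
    rw [← Nat.choose_symm hy]
    exact choose_mono_le (by omega) (by omega)

lemma choose_lt_choose_same {m x y : ℕ} (hxy : x < y) (hsum : x + y < m) :
    m.choose x < m.choose y := by
  have step : m.choose x < m.choose (x+1) := choose_step_lt (by omega)
  rcases le_or_gt (2*y) (m+1) with h|h
  · exact lt_of_lt_of_le step (choose_mono_le (by omega) h)
  · have hy : y ≤ m := by omega
    rw [← Nat.choose_symm hy]
    exact lt_of_lt_of_le step (choose_mono_le (by omega) (by omega))



variable {α : Type*} [DecidableEq α]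

lemma shadow_filter_eq {G : Finset α} {ρ t : ℕ} (ht : t ≤ ρ)
    {M : Finset (Finset α)} (hM : M ⊆ powersetCard ρ G) {R : Finset α} (hR : R ∈ M) :
    (Finset.shadow^[t] M).filter (fun T => T ⊆ R) = powersetCard (ρ - t) R := by
  have hsized : (M : Set (Finset α)).Sized ρ := fun S hS => (mem_powersetCard.1 (hM hS)).2
  ext T
  simp only [mem_filter, mem_powersetCard]
  constructor
  · rintro ⟨hT, hTR⟩
    exact ⟨hTR, hsized.shadow_iterate hT⟩
  · rintro ⟨hTR, hTc⟩
    refine ⟨?_, hTR⟩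
    rw [mem_shadow_iterate_iff_exists_sdiff]
    refine ⟨R, hR, hTR, ?_⟩
    rw [card_sdiff_of_subset hTR, hsized hR, hTc]
    omega

lemma subset_ground_of_mem_shadow_iterate {G : Finset α} {ρ t : ℕ} {M : Finset (Finset α)}
    (hM : M ⊆ powersetCard ρ G) {T : Finset α}
    (hT : T ∈ Finset.shadow^[t] M) : T ⊆ G := by
  rw [mem_shadow_iterate_iff_exists_sdiff] at hT
  obtain ⟨R, hR, hTR, -⟩ := hT
  exact hTR.trans (mem_powersetCard.1 (hM hR)).1

lemma lhs_count {G : Finset α} {ρ t : ℕ} (ht : t ≤ ρ)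
    {M : Finset (Finset α)} (hM : M ⊆ powersetCard ρ G) :
    ∑ R ∈ M, #((Finset.shadow^[t] M).filter (fun T => T ⊆ R)) = #M * ρ.choose t := by
  have hsized : (M : Set (Finset α)).Sized ρ := fun S hS => (mem_powersetCard.1 (hM hS)).2
  calc ∑ R ∈ M, #((Finset.shadow^[t] M).filter (fun T => T ⊆ R))
      = ∑ _R ∈ M, ρ.choose t := Finset.sum_congr rfl (fun R hR => by
        rw [shadow_filter_eq ht hM hR, card_powersetCard, hsized hR, Nat.choose_symm ht])
    _ = #M * ρ.choose t := by rw [sum_const, smul_eq_mul]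

lemma exchange_count {t : ℕ}
    {M : Finset (Finset α)} :
    ∑ R ∈ M, #((Finset.shadow^[t] M).filter (fun T => T ⊆ R))
      = ∑ T ∈ Finset.shadow^[t] M, #(M.filter (fun R => T ⊆ R)) := by
  simp_rw [card_filter]
  exact Finset.sum_comm

lemma deg_le {G : Finset α} {ρ t : ℕ} (ht : t ≤ ρ)
    {M : Finset (Finset α)} (hM : M ⊆ powersetCard ρ G)
    {T : Finset α} (hT : T ∈ Finset.shadow^[t] M) :
    #(M.filter (fun R => T ⊆ R)) ≤ (#G - (ρ - t)).choose t := by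
  have hsized : (M : Set (Finset α)).Sized ρ := fun S hS => (mem_powersetCard.1 (hM hS)).2
  have hTc : #T = ρ - t := hsized.shadow_iterate hT
  have hTG : T ⊆ G := subset_ground_of_mem_shadow_iterate hM hT
  have h1 : #(powersetCard t (G \ T)) = (#G - (ρ - t)).choose t := by
    rw [card_powersetCard, card_sdiff_of_subset hTG, hTc]
  rw [← h1]
  apply card_le_card_of_injOn (fun R => R \ T)
  · intro R hR
    rw [mem_coe, mem_filter] at hR
    rw [mem_coe, mem_powersetCard]
    refine ⟨sdiff_subset_sdiff (mem_powersetCard.1 (hM hR.1)).1 (le_refl _), ?_⟩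
    rw [card_sdiff_of_subset hR.2, hsized hR.1, hTc]
    omega
  · intro R1 h1' R2 h2' heq
    rw [mem_coe, mem_filter] at h1' h2'
    dsimp only at heq
    have e1 : R1 = R1 \ T ∪ T := by rw [sdiff_union_of_subset h1'.2]
    have e2 : R2 = R2 \ T ∪ T := by rw [sdiff_union_of_subset h2'.2]
    rw [e1, e2, heq]

lemma counting {G : Finset α} {ρ t : ℕ} (ht : t ≤ ρ)
    {M : Finset (Finset α)} (hM : M ⊆ powersetCard ρ G) :
    M.card * ρ.choose t ≤ #(Finset.shadow^[t] M) * (#G - (ρ - t)).choose t := by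
  calc #M * ρ.choose t
      = ∑ T ∈ Finset.shadow^[t] M, #(M.filter (fun R => T ⊆ R)) := by
        rw [← lhs_count ht hM, exchange_count]
    _ ≤ ∑ _T ∈ Finset.shadow^[t] M, (#G - (ρ - t)).choose t :=
        Finset.sum_le_sum (fun T hT => deg_le ht hM hT)
    _ = #(Finset.shadow^[t] M) * (#G - (ρ - t)).choose t := by rw [sum_const, smul_eq_mul]


/-- Johnson-graph connectivity step: if `M` is neither empty nor everything,
there is an adjacent pair across the boundary. -/
lemma johnson {G : Finset α} {ρ : ℕ} {M : Finset (Finset α)} (hM : M ⊆ powersetCard ρ G) :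
    ∀ k (Q Q' : Finset α), Q ∈ M → Q' ∈ powersetCard ρ G → Q' ∉ M → #(Q \ Q') = k →
    ∃ P ∈ M, ∃ P', P' ∈ powersetCard ρ G ∧ P' ∉ M ∧ #(P \ P') = 1 := by
  intro k
  induction k using Nat.strong_induction_on with
  | _ k ih =>
    intro Q Q' hQ hQ'G hQ' hk
    have hQG := mem_powersetCard.1 (hM hQ)
    have hQ'G' := mem_powersetCard.1 hQ'G
    have hne : Q ≠ Q' := fun h => hQ' (h ▸ hQ)
    have hd : (Q \ Q').Nonempty := by
      rw [sdiff_nonempty]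
      intro hsub
      exact hne (eq_of_subset_of_card_le hsub (by rw [hQG.2, hQ'G'.2]))
    rcases Nat.lt_or_ge 1 k with hk2 | hk1
    · -- k ≥ 2 : exchange one element
      obtain ⟨x, hx⟩ := hd
      have hd' : (Q' \ Q).Nonempty := by
        rw [sdiff_nonempty]
        intro hsub
        exact hne (eq_of_subset_of_card_le hsub (by rw [hQG.2, hQ'G'.2])).symm
      obtain ⟨y, hy⟩ := hd'
      rw [mem_sdiff] at hx hy
      set Q'' := insert x (Q'.erase y) with hQ''def
      have hxQ' : x ∉ Q'.erase y := fun h => hx.2 (mem_of_mem_erase h)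
      have hQ''c : #Q'' = ρ := by
        rw [hQ''def, card_insert_of_notMem hxQ', card_erase_of_mem hy.1, hQ'G'.2]
        have : 1 ≤ ρ := by
          rw [← hQ'G'.2]
          exact card_pos.2 ⟨y, hy.1⟩
        omega
      have hQ''G : Q'' ∈ powersetCard ρ G := by
        rw [mem_powersetCard]
        refine ⟨?_, hQ''c⟩
        intro z hz
        rw [hQ''def, mem_insert] at hz
        rcases hz with rfl | hz
        · exact hQG.1 hx.1
        · exact hQ'G'.1 (mem_of_mem_erase hz)
      by_cases hmem : Q'' ∈ M
      · refine ⟨Q'', hmem, Q', hQ'G, hQ', ?_⟩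
        have : Q'' \ Q' = {x} := by
          ext z
          simp only [hQ''def, mem_sdiff, mem_insert, mem_erase, mem_singleton]
          constructor
          · rintro ⟨rfl | ⟨hz1, hz2⟩, hz3⟩
            · rfl
            · exact absurd hz2 hz3
          · rintro rfl
            exact ⟨Or.inl rfl, hx.2⟩
        rw [this, card_singleton]
      · refine ih (k-1) (by omega) Q Q'' hQ hQ''G hmem ?_
        have : Q \ Q'' = (Q \ Q').erase x := by
          ext z
          simp only [hQ''def, mem_sdiff, mem_insert, mem_erase, not_or, mem_sdiff]
          constructor
          · rintro ⟨hzQ, hzx, hze⟩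
            by_cases hzy : z = y
            · subst hzy; exact absurd hzQ hy.2
            · exact ⟨hzx, hzQ, fun hzQ' => hze ⟨hzy, hzQ'⟩⟩
          · rintro ⟨hzx, hzQ, hzQ'⟩
            exact ⟨hzQ, hzx, fun h => hzQ' h.2⟩
        rw [this, card_erase_of_mem (mem_sdiff.2 hx), hk]
    · -- k ≤ 1, so k = 1
      have : k = 1 := by
        rcases hd with ⟨x, hx⟩
        have : 0 < #(Q \ Q') := card_pos.2 ⟨x, hx⟩
        omega
      exact ⟨Q, hQ, Q', hQ'G, hQ', by rw [hk, this]⟩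

lemma counting_strict {G : Finset α} {ρ t : ℕ} (ht1 : 1 ≤ t) (ht : t ≤ ρ)
    {M : Finset (Finset α)} (hM : M ⊆ powersetCard ρ G)
    {Q Q' : Finset α} (hQ : Q ∈ M) (hQ'G : Q' ∈ powersetCard ρ G) (hQ' : Q' ∉ M) :
    M.card * ρ.choose t + 1 ≤ #(Finset.shadow^[t] M) * (#G - (ρ - t)).choose t := by
  have hsized : (M : Set (Finset α)).Sized ρ := fun S hS => (mem_powersetCard.1 (hM hS)).2
  obtain ⟨P, hP, P', hP'G, hP', hPP'⟩ := johnson hM _ Q Q' hQ hQ'G hQ' rfl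
  -- pick T₀ ⊆ P ∩ P' of size ρ - t
  have hPc : #P = ρ := hsized hP
  have hPinter : #(P ∩ P') = ρ - 1 := by
    have := card_sdiff_add_card_inter P P'
    rw [hPP'] at this
    omega
  obtain ⟨T₀, hT₀sub, hT₀c⟩ := Finset.exists_subset_card_eq
    (show ρ - t ≤ #(P ∩ P') by omega)
  have hT₀P : T₀ ⊆ P := hT₀sub.trans inter_subset_left
  have hT₀mem : T₀ ∈ Finset.shadow^[t] M := by
    rw [mem_shadow_iterate_iff_exists_sdiff]
    exact ⟨P, hP, hT₀P, by rw [card_sdiff_of_subset hT₀P, hPc, hT₀c]; omega⟩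
  -- the degree of T₀ is strictly below the maximum
  have hdeg : #(M.filter (fun R => T₀ ⊆ R)) < (#G - (ρ - t)).choose t := by
    have hT₀G : T₀ ⊆ G := subset_ground_of_mem_shadow_iterate hM hT₀mem
    have hcardP : #(powersetCard t (G \ T₀)) = (#G - (ρ - t)).choose t := by
      rw [card_powersetCard, card_sdiff_of_subset hT₀G, hT₀c]
    have hT₀P' : T₀ ⊆ P' := hT₀sub.trans inter_subset_right
    have hP'c : #P' = ρ := (mem_powersetCard.1 hP'G).2
    have hP'T₀ : P' \ T₀ ∈ powersetCard t (G \ T₀) := by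
      rw [mem_powersetCard]
      refine ⟨sdiff_subset_sdiff (mem_powersetCard.1 hP'G).1 (le_refl _), ?_⟩
      rw [card_sdiff_of_subset hT₀P', hP'c, hT₀c]
      omega
    have hle : #(M.filter (fun R => T₀ ⊆ R)) ≤ #((powersetCard t (G \ T₀)).erase (P' \ T₀)) := by
      apply card_le_card_of_injOn (fun R => R \ T₀)
      · intro R hR
        rw [mem_coe, mem_filter] at hR
        rw [mem_coe, mem_erase]
        constructor
        · intro hcontra
          have : R = P' := by
            have e1 : R = R \ T₀ ∪ T₀ := by rw [sdiff_union_of_subset hR.2]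
            have e2 : P' = P' \ T₀ ∪ T₀ := by rw [sdiff_union_of_subset hT₀P']
            rw [e1, e2, show R \ T₀ = P' \ T₀ from hcontra]
          exact hP' (this ▸ hR.1)
        · rw [mem_powersetCard]
          refine ⟨sdiff_subset_sdiff (mem_powersetCard.1 (hM hR.1)).1 (le_refl _), ?_⟩
          rw [card_sdiff_of_subset hR.2, hsized hR.1, hT₀c]
          omega
      · intro R1 h1' R2 h2' heq
        rw [mem_coe, mem_filter] at h1' h2'
        dsimp only at heq
        have e1 : R1 = R1 \ T₀ ∪ T₀ := by rw [sdiff_union_of_subset h1'.2]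
        have e2 : R2 = R2 \ T₀ ∪ T₀ := by rw [sdiff_union_of_subset h2'.2]
        rw [e1, e2, heq]
    calc #(M.filter (fun R => T₀ ⊆ R)) ≤ _ := hle
      _ < #(powersetCard t (G \ T₀)) := card_erase_lt_of_mem hP'T₀
      _ = (#G - (ρ - t)).choose t := hcardP
  calc #M * ρ.choose t
      = ∑ T ∈ Finset.shadow^[t] M, #(M.filter (fun R => T ⊆ R)) := by
        rw [← lhs_count ht hM, exchange_count]
    _ < ∑ _T ∈ Finset.shadow^[t] M, (#G - (ρ - t)).choose t := by
        apply Finset.sum_lt_sum (fun T hT => deg_le ht hM hT) ⟨T₀, hT₀mem, hdeg⟩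
    _ = #(Finset.shadow^[t] M) * (#G - (ρ - t)).choose t := by rw [sum_const, smul_eq_mul]




/-- Extract the `m` smallest elements (under an injective valuation) of a finset. -/
lemma exists_lower_subset {γ β : Type*} [DecidableEq γ] [LinearOrder β] (f : γ → β)
    (hf : Function.Injective f) (Q : Finset γ) :
    ∀ m : ℕ, m ≤ #Q → ∃ R ⊆ Q, #R = m ∧ ∀ x ∈ R, ∀ y ∈ Q, y ∉ R → f x < f y := by
  intro m
  induction m with
  | zero => exact fun _ => ⟨∅, empty_subset _, card_empty, by simp⟩
  | succ m ih =>
    intro hm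
    obtain ⟨R, hRQ, hRc, hlt⟩ := ih (by omega)
    have hne : (Q \ R).Nonempty := by
      rw [sdiff_nonempty]
      intro hsub
      have := card_le_card hsub
      omega
    obtain ⟨y₀, hy₀, hy₀min⟩ := Finset.exists_min_image (Q \ R) f hne
    rw [mem_sdiff] at hy₀
    refine ⟨insert y₀ R, insert_subset hy₀.1 hRQ, by rw [card_insert_of_notMem hy₀.2, hRc], ?_⟩
    intro x hx y hy hyR
    rw [mem_insert] at hx
    have hyR' : y ∉ R := fun h => hyR (mem_insert_of_mem h)
    rcases hx with rfl | hx
    · have hne' : y ≠ x := fun h => hyR (h ▸ mem_insert_self x R)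
      have := hy₀min y (mem_sdiff.2 ⟨hy, hyR'⟩)
      exact lt_of_le_of_ne this (fun h => hne' (hf h.symm))
    · exact hlt x hx y hy hyR'

variable {n : ℕ}

/-- The initial segment `{0, ..., k-1}` of `Fin n`. -/
def seg (n k : ℕ) : Finset (Fin n) := univ.filter (fun i => (i : ℕ) < k)

lemma mem_seg {k : ℕ} {i : Fin n} : i ∈ seg n k ↔ (i : ℕ) < k := by
  simp [seg]

lemma card_seg {k : ℕ} (hk : k ≤ n) : #(seg n k) = k := by
  rw [show seg n k = Finset.attachFin (range k)
      (fun m hm => lt_of_lt_of_le (mem_range.1 hm) hk) from ?_, card_attachFin, card_range]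
  ext i
  simp [seg, mem_attachFin]

lemma seg_self : seg n n = univ := by
  ext i; simp [mem_seg, i.isLt]

lemma isInitSeg_powersetCard_seg (r k : ℕ) (hk : k ≤ n) :
    IsInitSeg (powersetCard r (seg n k)) r := by
  constructor
  · intro S hS
    exact (mem_powersetCard.1 hS).2
  · rintro S T hS ⟨hTS, hTc⟩
    rw [mem_powersetCard] at hS ⊢
    refine ⟨?_, hTc⟩
    rcases eq_or_lt_of_le hk with rfl | hk'
    · rw [seg_self]; exact subset_univ T
    · set ck : Fin n := ⟨k, hk'⟩
      have hbound : ∀ b ∈ S, b < ck := fun b hb => by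
        have := mem_seg.1 (hS.1 hb)
        exact Fin.lt_def.2 this
      have := Colex.forall_lt_mono hTS.le hbound
      intro b hb
      exact mem_seg.2 (Fin.lt_def.1 (this b hb))

/-- Lower subsets of `powersetCard ρ (seg n k)` are initial segments. -/
lemma isInitSeg_of_lower {ρ k : ℕ} (hk : k ≤ n) {M : Finset (Finset (Fin n))}
    (hMQ : M ⊆ powersetCard ρ (seg n k))
    (hlow : ∀ x ∈ M, ∀ y ∈ powersetCard ρ (seg n k), y ∉ M → toColex x < toColex y) :
    IsInitSeg M ρ := by
  constructor
  · intro S hS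
    exact (mem_powersetCard.1 (hMQ hS)).2
  · rintro S T hS ⟨hTS, hTc⟩
    have hTQ : T ∈ powersetCard ρ (seg n k) :=
      (isInitSeg_powersetCard_seg ρ k hk).2 (hMQ hS) ⟨hTS, hTc⟩
    by_contra hTM
    exact lt_asymm hTS (hlow S hS T hTQ hTM)



section Union
variable {n : ℕ} {k ρ : ℕ}

lemma ck_not_mem {S : Finset (Fin n)} (hk : k < n) (hS : S ⊆ seg n k) : (⟨k, hk⟩ : Fin n) ∉ S :=
  fun h => by simpa using mem_seg.1 (hS h)

lemma card_union_construction (hk : k < n) {M' : Finset (Finset (Fin n))}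
    (hM'Q : M' ⊆ powersetCard ρ (seg n k)) :
    #(powersetCard (ρ+1) (seg n k) ∪ M'.image (insert (⟨k, hk⟩ : Fin n)))
      = k.choose (ρ+1) + #M' := by
  set ck : Fin n := ⟨k, hk⟩
  have hdisj : Disjoint (powersetCard (ρ+1) (seg n k)) (M'.image (insert ck)) := by
    rw [disjoint_left]
    intro S hS hS'
    obtain ⟨T, hT, rfl⟩ := mem_image.1 hS'
    exact ck_not_mem hk (mem_powersetCard.1 hS).1 (mem_insert_self _ _)
  rw [card_union_of_disjoint hdisj, card_powersetCard, card_seg hk.le]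
  congr 1
  apply card_image_of_injOn
  intro S1 h1 S2 h2 heq
  have n1 : ck ∉ S1 := ck_not_mem hk (mem_powersetCard.1 (hM'Q h1)).1
  have n2 : ck ∉ S2 := ck_not_mem hk (mem_powersetCard.1 (hM'Q h2)).1
  have : (insert ck S1).erase ck = (insert ck S2).erase ck := by rw [heq]
  rwa [erase_insert n1, erase_insert n2] at this

lemma isInitSeg_union_construction (hk : k < n) {M' : Finset (Finset (Fin n))}
    (hM'Q : M' ⊆ powersetCard ρ (seg n k)) (hM'init : IsInitSeg M' ρ) :
    IsInitSeg (powersetCard (ρ+1) (seg n k) ∪ M'.image (insert (⟨k, hk⟩ : Fin n))) (ρ+1) := by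
  set ck : Fin n := ⟨k, hk⟩ with hckdef
  constructor
  · intro S hS
    rw [coe_union, Set.mem_union] at hS
    rcases hS with hS | hS
    · exact (mem_powersetCard.1 hS).2
    · obtain ⟨T, hT, rfl⟩ := mem_image.1 hS
      rw [card_insert_of_notMem (ck_not_mem hk (mem_powersetCard.1 (hM'Q hT)).1),
        (mem_powersetCard.1 (hM'Q hT)).2]
  · rintro S T hS ⟨hTS, hTc⟩
    rw [mem_union] at hS ⊢
    rcases hS with hS | hS
    · -- S in the bottom block: T also below ck
      left
      exact (isInitSeg_powersetCard_seg (ρ+1) k hk.le).2 hS ⟨hTS, hTc⟩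
    · obtain ⟨S₀, hS₀, rfl⟩ := mem_image.1 hS
      have hS₀seg : S₀ ⊆ seg n k := (mem_powersetCard.1 (hM'Q hS₀)).1
      have hS₀ck : ck ∉ S₀ := ck_not_mem hk hS₀seg
      -- every element of T is ≤ ck
      have hTle : ∀ b ∈ T, b ≤ ck := by
        obtain ⟨w, hwS, hwT, hall⟩ := toColex_lt_toColex_iff_exists_forall_lt.1 hTS
        have hwle : w ≤ ck := by
          rcases mem_insert.1 hwS with rfl | hwS₀
          · exact le_refl _
          · exact (Fin.lt_def.2 (mem_seg.1 (hS₀seg hwS₀))).le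
        intro b hb
        by_cases hbS : b ∈ insert ck S₀
        · rcases mem_insert.1 hbS with rfl | hbS₀
          · exact le_refl _
          · exact (Fin.lt_def.2 (mem_seg.1 (hS₀seg hbS₀))).le
        · exact ((hall b hb hbS).le.trans hwle)
      by_cases hckT : ck ∈ T
      · right
        set T₀ := T.erase ck with hT₀def
        have hT₀seg : T₀ ⊆ seg n k := by
          intro b hb
          rw [hT₀def, mem_erase] at hb
          have := hTle b hb.2
          exact mem_seg.2 (Fin.lt_def.1 (lt_of_le_of_ne this hb.1))
        have hT₀lt : toColex T₀ < toColex S₀ := by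
          have h1 : ({ck} : Finset (Fin n)) ⊆ T := singleton_subset_iff.2 hckT
          have h2 : ({ck} : Finset (Fin n)) ⊆ insert ck S₀ := singleton_subset_iff.2 (mem_insert_self _ _)
          have := (toColex_sdiff_lt_toColex_sdiff h1 h2).2 hTS
          rwa [sdiff_singleton_eq_erase, sdiff_singleton_eq_erase, erase_insert hS₀ck] at this
        have hT₀c : #T₀ = ρ := by
          rw [hT₀def, card_erase_of_mem hckT, hTc]
          omega
        have hT₀M : T₀ ∈ M' := hM'init.2 hS₀ ⟨hT₀lt, hT₀c⟩
        exact mem_image.2 ⟨T₀, hT₀M, by rw [hT₀def, insert_erase hckT]⟩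
      · left
        rw [mem_powersetCard]
        refine ⟨?_, hTc⟩
        intro b hb
        exact mem_seg.2 (Fin.lt_def.1 (lt_of_le_of_ne (hTle b hb) (fun h => hckT (h ▸ hb))))

lemma shadow_union_construction_lb (hk : k < n) (t : ℕ) (ht : t ≤ ρ) (hρk : ρ + 1 ≤ k)
    {M' : Finset (Finset (Fin n))} (hM'Q : M' ⊆ powersetCard ρ (seg n k)) :
    k.choose (ρ+1-t) + #(Finset.shadow^[t] M')
      ≤ #(Finset.shadow^[t] (powersetCard (ρ+1) (seg n k) ∪ M'.image (insert (⟨k, hk⟩ : Fin n)))) := by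
  set ck : Fin n := ⟨k, hk⟩
  set 𝒞 := powersetCard (ρ+1) (seg n k) ∪ M'.image (insert ck) with h𝒞def
  have hseg : #(seg n k) = k := card_seg hk.le
  have hsub1 : powersetCard (ρ+1-t) (seg n k) ⊆ Finset.shadow^[t] 𝒞 := by
    intro T hT
    rw [mem_powersetCard] at hT
    obtain ⟨R, hTR, hRseg, hRc⟩ := exists_subsuperset_card_eq (n := ρ+1) hT.1
      (by omega) (by omega)
    rw [mem_shadow_iterate_iff_exists_sdiff]
    refine ⟨R, mem_union_left _ (mem_powersetCard.2 ⟨hRseg, hRc⟩), hTR, ?_⟩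
    rw [card_sdiff_of_subset hTR, hRc, hT.2]
    omega
  have hsub2 : (Finset.shadow^[t] M').image (insert ck) ⊆ Finset.shadow^[t] 𝒞 := by
    intro T hT
    obtain ⟨T₀, hT₀, rfl⟩ := mem_image.1 hT
    rw [mem_shadow_iterate_iff_exists_sdiff] at hT₀ ⊢
    obtain ⟨S, hS, hT₀S, hcard⟩ := hT₀
    have hckS : ck ∉ S := ck_not_mem hk (mem_powersetCard.1 (hM'Q hS)).1
    refine ⟨insert ck S, mem_union_right _ (mem_image.2 ⟨S, hS, rfl⟩),
      insert_subset_insert _ hT₀S, ?_⟩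
    have : insert ck S \ insert ck T₀ = S \ T₀ := by
      ext z
      simp only [mem_sdiff, mem_insert, not_or]
      constructor
      · rintro ⟨rfl | hzS, hz1, hz2⟩
        · exact absurd rfl hz1
        · exact ⟨hzS, hz2⟩
      · rintro ⟨hzS, hz2⟩
        exact ⟨Or.inr hzS, fun h => hckS (h ▸ hzS), hz2⟩
    rw [this, hcard]
  have hdisj : Disjoint (powersetCard (ρ+1-t) (seg n k)) ((Finset.shadow^[t] M').image (insert ck)) := by
    rw [disjoint_left]
    intro T hT hT'
    obtain ⟨T₀, hT₀, rfl⟩ := mem_image.1 hT'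
    exact ck_not_mem hk (mem_powersetCard.1 hT).1 (mem_insert_self _ _)
  have himgcard : #((Finset.shadow^[t] M').image (insert ck)) = #(Finset.shadow^[t] M') := by
    apply card_image_of_injOn
    intro S1 h1 S2 h2 heq
    have hsub : ∀ S ∈ Finset.shadow^[t] M', ck ∉ S := by
      intro S hS
      rw [mem_shadow_iterate_iff_exists_sdiff] at hS
      obtain ⟨R, hR, hSR, -⟩ := hS
      exact fun h => ck_not_mem hk (mem_powersetCard.1 (hM'Q hR)).1 (hSR h)
    have : (insert ck S1).erase ck = (insert ck S2).erase ck := by rw [heq]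
    rwa [erase_insert (hsub S1 h1), erase_insert (hsub S2 h2)] at this
  calc k.choose (ρ+1-t) + #(Finset.shadow^[t] M')
      = #(powersetCard (ρ+1-t) (seg n k)) + #((Finset.shadow^[t] M').image (insert ck)) := by
        rw [card_powersetCard, hseg, himgcard]
    _ = #(powersetCard (ρ+1-t) (seg n k) ∪ (Finset.shadow^[t] M').image (insert ck)) :=
        (card_union_of_disjoint hdisj).symm
    _ ≤ #(Finset.shadow^[t] 𝒞) := card_le_card (union_subset hsub1 hsub2)

end Union

section Key
variable {n : ℕ}

lemma toColex_injective {α : Type*} [PartialOrder α] :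
    Function.Injective (toColex : Finset α → Colex (Finset α)) :=
  fun _ _ h => by rwa [toColex_inj] at h

set_option maxHeartbeats 2000000 in
/-- The key lower bound on iterated shadows, from Kruskal-Katona applied to an
explicit two-block initial segment. -/
lemma key_lb {r s k m : ℕ} (hs1 : 1 ≤ s) (hsr : s + 1 ≤ r) (hrk : r ≤ k) (hkn : k ≤ n)
    (hcond : 1 ≤ m → (k < n ∧ k + 2 ≤ r + s ∧ m < k.choose (r - 1)))
    {M : Finset (Finset (Fin n))} (hM : (M : Set (Finset (Fin n))).Sized r)
    (hcard : k.choose r + m ≤ #M) :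
    k.choose s + m + (if 1 ≤ m then 1 else 0) ≤ #(Finset.shadow^[r - s] M) := by
  set t := r - s with htdef
  rcases Nat.eq_zero_or_pos m with rfl | hm
  · -- m = 0 : single block
    simp only [if_neg (by omega : ¬ (1:ℕ) ≤ 0), Nat.add_zero]
    set 𝒞 := powersetCard r (seg n k) with h𝒞def
    have h𝒞card : #𝒞 = k.choose r := by rw [h𝒞def, card_powersetCard, card_seg hkn]
    have hkk : #(Finset.shadow^[t] 𝒞) ≤ #(Finset.shadow^[t] M) :=
      Finset.iterated_kk hM (by omega) (isInitSeg_powersetCard_seg r k hkn)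
    refine le_trans ?_ hkk
    have hsub : powersetCard s (seg n k) ⊆ Finset.shadow^[t] 𝒞 := by
      intro T hT
      rw [mem_powersetCard] at hT
      obtain ⟨R, hTR, hRseg, hRc⟩ := exists_subsuperset_card_eq (n := r) hT.1
        (by omega) (by rw [card_seg hkn]; omega)
      rw [mem_shadow_iterate_iff_exists_sdiff]
      refine ⟨R, mem_powersetCard.2 ⟨hRseg, hRc⟩, hTR, ?_⟩
      rw [card_sdiff_of_subset hTR, hRc, hT.2]
    calc k.choose s = #(powersetCard s (seg n k)) := by rw [card_powersetCard, card_seg hkn]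
      _ ≤ #(Finset.shadow^[t] 𝒞) := card_le_card hsub
  · obtain ⟨hklt, hk2, hmlt⟩ := hcond hm
    rw [if_pos (by omega : 1 ≤ m)]
    obtain ⟨ρ, rfl⟩ : ∃ ρ, r = ρ + 1 := ⟨r - 1, by omega⟩
    simp only [Nat.add_sub_cancel] at hmlt
    set Q := powersetCard ρ (seg n k) with hQdef
    have hQcard : #Q = k.choose ρ := by rw [hQdef, card_powersetCard, card_seg hkn]
    obtain ⟨M', hM'Q, hM'c, hlow⟩ := exists_lower_subset toColex
      toColex_injective Q m (by omega)
    have hM'init : IsInitSeg M' ρ := isInitSeg_of_lower hkn hM'Q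
      (fun x hx y hy hyM => hlow x hx y hy hyM)
    set ck : Fin n := ⟨k, hklt⟩
    set 𝒞 := powersetCard (ρ+1) (seg n k) ∪ M'.image (insert ck) with h𝒞def
    have h𝒞card : #𝒞 = k.choose (ρ+1) + m := by
      rw [h𝒞def, card_union_construction hklt hM'Q, hM'c]
    have hkk : #(Finset.shadow^[t] 𝒞) ≤ #(Finset.shadow^[t] M) :=
      Finset.iterated_kk hM (by omega) (isInitSeg_union_construction hklt hM'Q hM'init)
    have hlb := shadow_union_construction_lb hklt t (by omega) (by omega) hM'Q
    -- strict counting on M'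
    obtain ⟨P, hP⟩ : M'.Nonempty := card_pos.1 (by omega)
    obtain ⟨P', hP'Q, hP'M⟩ : ∃ P' ∈ Q, P' ∉ M' := by
      by_contra hcon
      push_neg at hcon
      have : Q ⊆ M' := fun y hy => hcon y hy
      have := card_le_card this
      omega
    have hcount := counting_strict (G := seg n k) (ρ := ρ) (t := t)
      (by omega) (by omega) hM'Q hP hP'Q hP'M
    rw [card_seg hkn] at hcount
    have hDle : (k - (ρ - t)).choose t ≤ ρ.choose t := Nat.choose_le_choose t (by omega)
    have hDpos : 0 < (k - (ρ - t)).choose t := Nat.choose_pos (by omega)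
    have hshadowM' : m + 1 ≤ #(Finset.shadow^[t] M') := by
      by_contra hcon
      push_neg at hcon
      have h1 : #(Finset.shadow^[t] M') * (k - (ρ - t)).choose t
          ≤ m * (k - (ρ - t)).choose t := Nat.mul_le_mul_right _ (by omega)
      have h2 : m * (k - (ρ - t)).choose t ≤ m * ρ.choose t := Nat.mul_le_mul_left _ hDle
      rw [hM'c] at hcount
      omega
    have hfin : ρ + 1 - t = s := by omega
    rw [hfin, ← h𝒞def] at hlb
    omega

end Key

section GMono
-- the function κ ↦ C(κ, κ-(n-b)) - C(κ, a) is (weakly) decreasing in κ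
lemma h_step {n a b κ : ℕ} (hba : b + 1 ≤ a) (hn : a + b + 1 ≤ n)
    (hκ1 : n - b ≤ κ) (hκ2 : κ + 1 ≤ n) :
    (((κ+1).choose (κ+1-(n-b)) : ℤ) - ((κ+1).choose a : ℤ))
      ≤ ((κ.choose (κ-(n-b)) : ℤ) - (κ.choose a : ℤ)) := by
  obtain ⟨q, hq⟩ : ∃ q, κ - (n-b) = q := ⟨_, rfl⟩
  have hq1 : κ + 1 - (n-b) = q + 1 := by omega
  obtain ⟨a', rfl⟩ : ∃ a', a = a' + 1 := ⟨a - 1, by omega⟩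
  have e1 : (κ+1).choose (q+1) = κ.choose q + κ.choose (q+1) := Nat.choose_succ_succ κ q
  have e2 : (κ+1).choose (a'+1) = κ.choose a' + κ.choose (a'+1) := Nat.choose_succ_succ κ a'
  have cmp : κ.choose (q+1) ≤ κ.choose a' := choose_le_choose_same (by omega) (by omega)
  rw [hq, hq1, e1, e2]
  push_cast
  omega

lemma h_step_strict {n a b κ : ℕ} (hba : b + 1 ≤ a) (hn : a + b + 1 ≤ n)
    (hκ1 : n - b ≤ κ) (hκ2 : κ + 1 ≤ n) (hs : b + 2 ≤ a ∨ κ + 2 ≤ n) :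
    (((κ+1).choose (κ+1-(n-b)) : ℤ) - ((κ+1).choose a : ℤ)) + 1
      ≤ ((κ.choose (κ-(n-b)) : ℤ) - (κ.choose a : ℤ)) := by
  obtain ⟨q, hq⟩ : ∃ q, κ - (n-b) = q := ⟨_, rfl⟩
  have hq1 : κ + 1 - (n-b) = q + 1 := by omega
  obtain ⟨a', rfl⟩ : ∃ a', a = a' + 1 := ⟨a - 1, by omega⟩
  have e1 : (κ+1).choose (q+1) = κ.choose q + κ.choose (q+1) := Nat.choose_succ_succ κ q
  have e2 : (κ+1).choose (a'+1) = κ.choose a' + κ.choose (a'+1) := Nat.choose_succ_succ κ a'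
  have cmp : κ.choose (q+1) < κ.choose a' := choose_lt_choose_same (by omega) (by omega)
  rw [hq, hq1, e1, e2]
  push_cast
  omega

lemma h_mono {n a b : ℕ} (hba : b + 1 ≤ a) (hn : a + b + 1 ≤ n) (κ₁ κ₂ : ℕ)
    (h1 : n - b ≤ κ₁) (h12 : κ₁ ≤ κ₂) (h2 : κ₂ ≤ n) :
    ((κ₂.choose (κ₂-(n-b)) : ℤ) - (κ₂.choose a : ℤ))
      ≤ ((κ₁.choose (κ₁-(n-b)) : ℤ) - (κ₁.choose a : ℤ)) := by
  induction κ₂, h12 using Nat.le_induction with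
  | base => exact le_refl _
  | succ κ hκ ih =>
    exact le_trans (h_step hba hn (by omega) (by omega)) (ih (by omega))

lemma h_strict {n a b : ℕ} (hba : b + 1 ≤ a) (hn : a + b + 1 ≤ n) (κ₁ κ₂ : ℕ)
    (h1 : n - b ≤ κ₁) (h12 : κ₁ < κ₂) (h2 : κ₂ ≤ n) (hs : b + 2 ≤ a ∨ κ₁ + 2 ≤ n) :
    ((κ₂.choose (κ₂-(n-b)) : ℤ) - (κ₂.choose a : ℤ)) + 1
      ≤ ((κ₁.choose (κ₁-(n-b)) : ℤ) - (κ₁.choose a : ℤ)) := by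
  have step := h_step_strict hba hn h1 (by omega) hs
  have mono := h_mono hba hn (κ₁+1) κ₂ (by omega) (by omega) h2
  linarith

end GMono

section Transfer
variable {n : ℕ}

def phi (n : ℕ) (X : Finset ℕ) : Finset (Fin n) := univ.filter (fun i => (i : ℕ) + 1 ∈ X)

lemma mem_phi {X : Finset ℕ} {i : Fin n} : i ∈ phi n X ↔ (i : ℕ) + 1 ∈ X := by simp [phi]

lemma phi_card {X : Finset ℕ} (hX : X ⊆ Finset.Icc 1 n) : #(phi n X) = #X := by
  refine card_bij (fun (i : Fin n) (_ : i ∈ phi n X) => (i : ℕ) + 1) ?_ ?_ ?_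
  · intro i hi; exact mem_phi.1 hi
  · intro i hi j hj hij
    exact Fin.ext (by omega)
  · intro x hx
    have hx' := mem_Icc.1 (hX hx)
    refine ⟨⟨x - 1, by omega⟩, mem_phi.2 ?_, by simp; omega⟩
    simpa [show x - 1 + 1 = x by omega] using hx

lemma phi_inj {X Y : Finset ℕ} (hX : X ⊆ Finset.Icc 1 n) (hY : Y ⊆ Finset.Icc 1 n)
    (h : phi n X = phi n Y) : X = Y := by
  have key : ∀ (U V : Finset ℕ), U ⊆ Finset.Icc 1 n → phi n U = phi n V → U ⊆ V := by
    intro U V hU hUV x hx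
    have hx' := mem_Icc.1 (hU hx)
    have : (⟨x - 1, by omega⟩ : Fin n) ∈ phi n U :=
      mem_phi.2 (by simpa [show x - 1 + 1 = x by omega] using hx)
    rw [hUV] at this
    have := mem_phi.1 this
    simpa [show x - 1 + 1 = x by omega] using this
  exact subset_antisymm (key X Y hX h) (key Y X hY h.symm)

end Transfer
end FT

/-- Two families are cross-intersecting if every member of the first intersects
every member of the second. -/
def CrossIntersecting (A B : Finset (Finset ℕ)) : Prop :=
  ∀ X ∈ A, ∀ Y ∈ B, (X ∩ Y).Nonempty

open Finset in
set_option maxHeartbeats 1000000 in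
theorem stmt13 (n a b j : ℕ) (hb : 0 < b) (hba : b < a) (hn : a + b < n)
    (A B : Finset (Finset ℕ))
    (hA : A ⊆ Finset.powersetCard a (Finset.Icc 1 n))
    (hB : B ⊆ Finset.powersetCard b (Finset.Icc 1 n))
    (hcross : CrossIntersecting A B)
    (hj1 : 1 ≤ j) (hjb : j ≤ b)
    (hBlow : (n - j).choose (b - j) ≤ B.card) :
    (A.card : ℤ) + (B.card : ℤ) ≤
      (n.choose a : ℤ) + ((n - j).choose (b - j) : ℤ) - ((n - j).choose a : ℤ) ∧
    ((n - j).choose (b - j) < B.card →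
      ¬(a = b + 1 ∧ j = 1 ∧ B.card = n.choose b) →
        (A.card : ℤ) + (B.card : ℤ) <
          (n.choose a : ℤ) + ((n - j).choose (b - j) : ℤ) - ((n - j).choose a : ℤ)) := by
  classical
  have hab : b + 1 ≤ a := hba
  have hn' : a + b + 1 ≤ n := hn
  have hAmem : ∀ X ∈ A, X ⊆ Finset.Icc 1 n ∧ #X = a := fun X hX => mem_powersetCard.1 (hA hX)
  have hBmem : ∀ Y ∈ B, Y ⊆ Finset.Icc 1 n ∧ #Y = b := fun Y hY => mem_powersetCard.1 (hB hY)
  set A' := A.image (FT.phi n) with hA'def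
  set B' := B.image (FT.phi n) with hB'def
  have hA'card : #A' = #A := card_image_of_injOn (by
    intro X hX Y hY h
    rw [mem_coe] at hX hY
    exact FT.phi_inj (hAmem X hX).1 (hAmem Y hY).1 h)
  have hB'card : #B' = #B := card_image_of_injOn (by
    intro X hX Y hY h
    rw [mem_coe] at hX hY
    exact FT.phi_inj (hBmem X hX).1 (hBmem Y hY).1 h)
  set t := n - b - a with htdef
  set Bc := B'.image (fun S => Sᶜ) with hBcdef
  have hBccard : #Bc = #B := by
    rw [hBcdef, card_image_of_injOn (fun S _ T _ h => compl_injective h), hB'card]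
  have hBcsub : Bc ⊆ powersetCard (n-b) univ := by
    intro S hS
    obtain ⟨T', hT', rfl⟩ := mem_image.1 hS
    obtain ⟨Y, hY, rfl⟩ := mem_image.1 hT'
    rw [mem_powersetCard]
    refine ⟨subset_univ _, ?_⟩
    rw [card_compl, Fintype.card_fin, FT.phi_card (hBmem Y hY).1, (hBmem Y hY).2]
  have hBcsized : (Bc : Set (Finset (Fin n))).Sized (n-b) :=
    fun S hS => (mem_powersetCard.1 (hBcsub hS)).2
  -- cross-intersecting ⇒ A' disjoint from iterated shadow of complements
  have hdisj : Disjoint A' (Finset.shadow^[t] Bc) := by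
    rw [disjoint_left]
    rintro S hS hSsh
    obtain ⟨X, hX, rfl⟩ := mem_image.1 hS
    rw [mem_shadow_iterate_iff_exists_sdiff] at hSsh
    obtain ⟨C, hC, hsub, -⟩ := hSsh
    obtain ⟨T', hT', rfl⟩ := mem_image.1 hC
    obtain ⟨Y, hY, rfl⟩ := mem_image.1 hT'
    obtain ⟨z, hz⟩ := hcross X hX Y hY
    rw [mem_inter] at hz
    have hz' := mem_Icc.1 ((hAmem X hX).1 hz.1)
    have hmemX : (⟨z-1, by omega⟩ : Fin n) ∈ FT.phi n X :=
      FT.mem_phi.2 (by simpa [show z - 1 + 1 = z by omega] using hz.1)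
    have hmemY : (⟨z-1, by omega⟩ : Fin n) ∈ FT.phi n Y :=
      FT.mem_phi.2 (by simpa [show z - 1 + 1 = z by omega] using hz.2)
    exact (mem_compl.1 (hsub hmemX)) hmemY
  have hA'bound : #A' + #(Finset.shadow^[t] Bc) ≤ n.choose a := by
    have hsub : A' ∪ Finset.shadow^[t] Bc ⊆ powersetCard a univ := by
      intro S hS
      rw [mem_powersetCard]
      refine ⟨subset_univ _, ?_⟩
      rcases mem_union.1 hS with hS' | hS'
      · obtain ⟨X, hX, rfl⟩ := mem_image.1 hS'
        rw [FT.phi_card (hAmem X hX).1, (hAmem X hX).2]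
      · have := hBcsized.shadow_iterate hS'
        omega
    calc #A' + #(Finset.shadow^[t] Bc) = #(A' ∪ Finset.shadow^[t] Bc) :=
          (card_union_of_disjoint hdisj).symm
      _ ≤ #(powersetCard a univ) := card_le_card hsub
      _ = n.choose a := by rw [card_powersetCard, card_univ, Fintype.card_fin]
  -- the threshold K and excess m
  set β := #B with hβdef
  have hsymj : (n-j).choose (n-b) = (n-j).choose (b-j) := by
    have h1 : (n-j).choose ((n-j)-(n-b)) = (n-j).choose (n-b) := Nat.choose_symm (by omega)
    rw [show b - j = (n-j) - (n-b) by omega]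
    exact h1.symm
  have hβ1 : (n-j).choose (n-b) ≤ β := by rw [hsymj]; exact hBlow
  set K := Nat.findGreatest (fun κ => κ.choose (n-b) ≤ β) n with hKdef
  have hKge : n - j ≤ K := Nat.le_findGreatest (by omega) hβ1
  have hKle : K ≤ n := Nat.findGreatest_le n
  have hKspec : K.choose (n-b) ≤ β := by
    have h := Nat.findGreatest_spec (P := fun κ => κ.choose (n-b) ≤ β)
      (show n - j ≤ n by omega) hβ1
    exact h
  have hβub : β ≤ n.choose b := by
    calc β ≤ #(powersetCard b (Finset.Icc 1 n)) := card_le_card hB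
      _ = n.choose b := by rw [card_powersetCard, Nat.card_Icc, show n + 1 - 1 = n by omega]
  have hsymn : n.choose (n-b) = n.choose b := Nat.choose_symm (by omega)
  set m := β - K.choose (n-b) with hmdef
  have hmeq : K.choose (n-b) + m = β := by omega
  have hKltn : 1 ≤ m → K < n := by
    intro hm1
    rcases lt_or_eq_of_le hKle with h | h
    · exact h
    · exfalso
      have hbr : K.choose (n-b) = n.choose (n-b) := by rw [h]
      omega
  have hmlt : 1 ≤ m → m < K.choose (n-b-1) := by
    intro hm1
    have hKn := hKltn hm1
    have hgt : ¬ (K+1).choose (n-b) ≤ β := by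
      have h := Nat.findGreatest_is_greatest (P := fun κ => κ.choose (n-b) ≤ β) (n := n)
        (k := K+1) (by rw [← hKdef]; omega) (by omega)
      exact h
    push_neg at hgt
    obtain ⟨q, hq⟩ : ∃ q, n - b = q + 1 := ⟨n-b-1, by omega⟩
    have hpas : (K+1).choose (q+1) = K.choose q + K.choose (q+1) := Nat.choose_succ_succ K q
    have hbr1 : K.choose (n-b) = K.choose (q+1) := by rw [hq]
    have hbr2 : (K+1).choose (n-b) = (K+1).choose (q+1) := by rw [hq]
    rw [show n - b - 1 = q by omega]
    omega
  have hkey := FT.key_lb (n := n) (r := n-b) (s := a) (k := K) (m := m)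
    (by omega) (by omega) (by omega) hKle
    (fun hm1 => ⟨hKltn hm1, by have := hKltn hm1; omega, hmlt hm1⟩)
    hBcsized (by rw [hBccard]; omega)
  have hbridgeT : #(Finset.shadow^[n - b - a] Bc) = #(Finset.shadow^[t] Bc) := rfl
  rw [hbridgeT] at hkey
  have hsymK : K.choose (n-b) = K.choose (K-(n-b)) := by
    have := Nat.choose_symm (show n - b ≤ K by omega)
    rw [← this]
  have hhh := FT.h_mono (n := n) (a := a) (b := b) hab hn' (n-j) K (by omega) hKge hKle
  rw [show (n-j) - (n-b) = b - j by omega] at hhh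
  constructor
  · -- part 1
    have hkey0 : K.choose a + m ≤ #(Finset.shadow^[t] Bc) :=
      le_trans (Nat.le_add_right _ _) hkey
    omega
  · -- part 2 : strictness
    intro hgtB hexc
    by_cases hKj : K = n - j
    · -- K = n-j : then m ≥ 1, bonus kicks in
      have hbr1 : K.choose (n-b) = (n-j).choose (n-b) := by rw [hKj]
      have hbr2 : K.choose a = (n-j).choose a := by rw [hKj]
      have hm1 : 1 ≤ m := by omega
      rw [if_pos hm1] at hkey
      omega
    · have hKgt : n - j < K := lt_of_le_of_ne hKge (Ne.symm hKj)
      have hkey0 : K.choose a + m ≤ #(Finset.shadow^[t] Bc) :=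
        le_trans (Nat.le_add_right _ _) hkey
      by_cases hKn : K = n
      · -- K = n : B is everything, m = 0
        have hm0 : m = 0 := by
          by_contra hm1
          exact absurd hKn (by have := hKltn (by omega); omega)
        have hbr1 : K.choose (n-b) = n.choose (n-b) := by rw [hKn]
        have hβeq : β = n.choose b := by omega
        have hcase : b + 2 ≤ a ∨ (n-j) + 2 ≤ n := by
          by_contra hcon
          push_neg at hcon
          exact hexc ⟨by omega, by omega, hβeq⟩
        have hstr := FT.h_strict (n := n) (a := a) (b := b) hab hn' (n-j) K
          (by omega) hKgt hKle hcase
        rw [show (n-j) - (n-b) = b - j by omega] at hstr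
        omega
      · have hKn' : K < n := lt_of_le_of_ne hKle hKn
        have hstr := FT.h_strict (n := n) (a := a) (b := b) hab hn' (n-j) K
          (by omega) hKgt hKle (Or.inr (by omega))
        rw [show (n-j) - (n-b) = b - j by omega] at hstr
        omega
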